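/- arXiv:2303.01071 — 2 statements merged into one kernel-verified Lean document; each statement's English description precedes it below -/
import Mathlib

section
/- (Morse-type lemma.) Let L > 0, θ_s ∈ ℝ, and let E : [θ_s − L, θ_s + L] → ℝ be C² with E(θ_s − t) = E(θ_s + t) for all 0 ≤ t ≤ L. Suppose δ > 0 is such that either E''(θ) ≥ 2 for every θ in the domain with |E'(θ)| ≤ δ, or E''(θ) ≤ −2 for every θ in the domain with |E'(θ)| ≤ δ. Then: (i) for all θ₁, θ₂ in the domain with M := min(|θ₂ − θ₁|, |θ₂ + θ₁ − 2θ_s|) ≤ δ, one has |E(θ₂) − E(θ₁)| ≥ M²/2; (ii) for all θ in the domain, |E'(θ)| ≥ min(δ, |θ − θ_s|). -/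
open Set Topology Filter

variable {L θs δ : ℝ} {E E' E'' : ℝ → ℝ}


lemma mono_aux {a b : ℝ} {f f' : ℝ → ℝ}
    (hf : ∀ θ ∈ Icc a b, HasDerivWithinAt f (f' θ) (Icc a b) θ)
    {c d C : ℝ} (hac : a ≤ c) (hcd : c ≤ d) (hdb : d ≤ b)
    (hC : ∀ t ∈ Ioo c d, C ≤ f' t) :
    C * (d - c) ≤ f d - f c := by
  have hsub : Icc c d ⊆ Icc a b := Icc_subset_Icc hac hdb
  have hda : ∀ t ∈ Ioo c d, HasDerivAt f (f' t) t := fun t ht =>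
    (hf t (hsub ⟨ht.1.le, ht.2.le⟩)).hasDerivAt
      (Icc_mem_nhds (lt_of_le_of_lt hac ht.1) (lt_of_lt_of_le ht.2 hdb))
  have hcont : ContinuousOn f (Icc c d) := fun t ht =>
    ((hf t (hsub ht)).continuousWithinAt).mono hsub
  have hdiff : DifferentiableOn ℝ f (interior (Icc c d)) := by
    rw [interior_Icc]
    exact fun t ht => (hda t ht).differentiableAt.differentiableWithinAt
  have hderiv : ∀ t ∈ interior (Icc c d), C ≤ deriv f t := by
    rw [interior_Icc]; intro t ht; rw [(hda t ht).deriv]; exact hC t ht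
  exact (convex_Icc c d).mul_sub_le_image_sub_of_le_deriv hcont hdiff hderiv
    c ⟨le_refl c, hcd⟩ d ⟨hcd, le_refl d⟩ hcd

lemma reflE {L θs : ℝ} {E : ℝ → ℝ}
    (hsym : ∀ t ∈ Icc (0 : ℝ) L, E (θs - t) = E (θs + t))
    {θ : ℝ} (hθ : θ ∈ Icc (θs - L) (θs + L)) : E (2 * θs - θ) = E θ := by
  rcases le_total θs θ with h | h
  · have := hsym (θ - θs) ⟨by linarith, by linarith [hθ.2]⟩
    rw [show θs - (θ - θs) = 2 * θs - θ by ring, show θs + (θ - θs) = θ by ring] at this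
    exact this
  · have := hsym (θs - θ) ⟨by linarith, by linarith [hθ.1]⟩
    rw [show θs - (θs - θ) = θ by ring, show θs + (θs - θ) = 2 * θs - θ by ring] at this
    exact this.symm

lemma reflmem {L θs θ : ℝ} (hθ : θ ∈ Icc (θs - L) (θs + L)) :
    2 * θs - θ ∈ Icc (θs - L) (θs + L) := ⟨by linarith [hθ.2], by linarith [hθ.1]⟩

lemma reflE' {L θs : ℝ} {E E' : ℝ → ℝ} (hL : 0 < L)
    (hE' : ∀ θ ∈ Icc (θs - L) (θs + L),
      HasDerivWithinAt E (E' θ) (Icc (θs - L) (θs + L)) θ)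
    (hsym : ∀ t ∈ Icc (0 : ℝ) L, E (θs - t) = E (θs + t))
    {θ : ℝ} (hθ : θ ∈ Icc (θs - L) (θs + L)) : E' (2 * θs - θ) = -E' θ := by
  set I := Icc (θs - L) (θs + L) with hI
  have hmaps : MapsTo (fun u => 2 * θs - u) I I := fun u hu => reflmem hu
  have h0 : HasDerivWithinAt (fun u : ℝ => 2 * θs - u) (-1) I θ :=
    ((hasDerivAt_id θ).const_sub (2 * θs)).hasDerivWithinAt
  have h1 : HasDerivWithinAt (E ∘ fun u => 2 * θs - u) (E' (2 * θs - θ) * (-1)) I θ :=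
    (hE' _ (reflmem hθ)).comp θ h0 hmaps
  have h2 : HasDerivWithinAt E (E' (2 * θs - θ) * (-1)) I θ := by
    refine h1.congr (fun y hy => ?_) ?_
    · exact (reflE hsym hy).symm
    · exact (reflE hsym hθ).symm
  have hu : UniqueDiffWithinAt ℝ I θ := (uniqueDiffOn_Icc (by linarith)) θ hθ
  have e1 := (hE' θ hθ).derivWithin hu
  have e2 := h2.derivWithin hu
  rw [e1] at e2
  linarith [e2]

variable {L θs δ : ℝ} {E E' E'' : ℝ → ℝ}

lemma step0 (hL : 0 < L)
    (hE' : ∀ θ ∈ Icc (θs - L) (θs + L),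
      HasDerivWithinAt E (E' θ) (Icc (θs - L) (θs + L)) θ)
    (hsym : ∀ t ∈ Icc (0 : ℝ) L, E (θs - t) = E (θs + t)) : E' θs = 0 := by
  have h := reflE' hL hE' hsym (θ := θs) ⟨by linarith, by linarith⟩
  rw [show 2 * θs - θs = θs by ring] at h
  linarith

lemma step1 (hL : 0 < L) (hδ : 0 < δ)
    (hE' : ∀ θ ∈ Icc (θs - L) (θs + L),
      HasDerivWithinAt E (E' θ) (Icc (θs - L) (θs + L)) θ)
    (hE'' : ∀ θ ∈ Icc (θs - L) (θs + L),
      HasDerivWithinAt E' (E'' θ) (Icc (θs - L) (θs + L)) θ)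
    (hsym : ∀ t ∈ Icc (0 : ℝ) L, E (θs - t) = E (θs + t))
    (hconv : ∀ θ ∈ Icc (θs - L) (θs + L), |E' θ| ≤ δ → 2 ≤ E'' θ) :
    ∀ θ ∈ Icc θs (θs + L), 0 ≤ E' θ := by
  have h0 : E' θs = 0 := step0 hL hE' hsym
  have contE' : ContinuousOn E' (Icc (θs - L) (θs + L)) :=
    fun θ hθ => (hE'' θ hθ).continuousWithinAt
  have hsubI : Icc θs (θs + L) ⊆ Icc (θs - L) (θs + L) :=
    Icc_subset_Icc (by linarith) le_rfl
  by_contra hcon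
  push_neg at hcon
  obtain ⟨θ₀, hθ₀, hneg⟩ := hcon
  set ε := min δ (-E' θ₀) / 2 with hε_def
  have hε : 0 < ε := by
    have : 0 < min δ (-E' θ₀) := lt_min hδ (by linarith)
    positivity
  have h2ε : 2 * ε ≤ δ := by
    have := min_le_left δ (-E' θ₀); rw [hε_def]; linarith
  have hsub2 : Icc θs θ₀ ⊆ Icc (θs - L) (θs + L) :=
    Icc_subset_Icc (by linarith) hθ₀.2
  set S : Set ℝ := Icc θs θ₀ ∩ E' ⁻¹' Iic (-(2 * ε)) with hS_def
  have hScl : IsClosed S :=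
    (contE'.mono hsub2).preimage_isClosed_of_isClosed isClosed_Icc isClosed_Iic
  have hθ₀S : θ₀ ∈ S := by
    refine ⟨⟨hθ₀.1, le_rfl⟩, ?_⟩
    simp only [mem_preimage, mem_Iic]
    have := min_le_right δ (-E' θ₀)
    rw [hε_def]; linarith
  set d := sInf S with hd_def
  have hdS : d ∈ S := hScl.csInf_mem ⟨θ₀, hθ₀S⟩ ⟨θs, fun x hx => hx.1.1⟩
  have hdneg : E' d ≤ -(2 * ε) := hdS.2
  have hθsd : θs < d := by
    rcases lt_or_eq_of_le hdS.1.1 with h | h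
    · exact h
    · exfalso; rw [← h] at hdneg; rw [h0] at hdneg; linarith
  set T : Set ℝ := Icc θs d ∩ E' ⁻¹' Ici (-ε) with hT_def
  have hsub3 : Icc θs d ⊆ Icc (θs - L) (θs + L) :=
    Icc_subset_Icc (by linarith) (hdS.1.2.trans hθ₀.2)
  have hTcl : IsClosed T :=
    (contE'.mono hsub3).preimage_isClosed_of_isClosed isClosed_Icc isClosed_Ici
  have hθsT : θs ∈ T := by
    refine ⟨⟨le_rfl, hθsd.le⟩, ?_⟩
    simp only [mem_preimage, mem_Ici, h0]; linarith
  set c := sSup T with hc_def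
  have hcT : c ∈ T := hTcl.csSup_mem ⟨θs, hθsT⟩ ⟨d, fun x hx => hx.1.2⟩
  have hcd : c < d := by
    rcases lt_or_eq_of_le hcT.1.2 with h | h
    · exact h
    · exfalso; have := hcT.2; rw [h] at this; simp only [mem_preimage, mem_Ici] at this; linarith
  have hmid : ∀ t ∈ Ioo c d, |E' t| ≤ δ := by
    intro t ht
    have htIcc : t ∈ Icc θs d := ⟨hcT.1.1.trans ht.1.le, ht.2.le⟩
    have hnotT : t ∉ T := fun hmem => absurd (le_csSup ⟨d, fun x hx => hx.1.2⟩ hmem) (not_le.mpr ht.1)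
    have hlt : E' t < -ε := by
      by_contra hge
      exact hnotT ⟨htIcc, le_of_not_gt hge⟩
    have hnotS : t ∉ S := fun hmem => absurd (csInf_le ⟨θs, fun x hx => hx.1.1⟩ hmem) (not_le.mpr ht.2)
    have hgt : -(2 * ε) < E' t := by
      by_contra hle
      push_neg at hle
      exact hnotS ⟨⟨htIcc.1, ht.2.le.trans hdS.1.2⟩, hle⟩
    rw [abs_le]; constructor <;> linarith
  have hgrow : 2 * (d - c) ≤ E' d - E' c := by
    refine mono_aux hE'' (by linarith [hcT.1.1]) hcd.le (hdS.1.2.trans hθ₀.2) ?_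
    intro t ht
    refine hconv t ?_ (hmid t ht)
    exact ⟨by linarith [hcT.1.1, ht.1], by linarith [ht.2, hdS.1.2, hθ₀.2]⟩
  have hcval : -ε ≤ E' c := hcT.2
  linarith

lemma step2 (hL : 0 < L) (hδ : 0 < δ)
    (hE' : ∀ θ ∈ Icc (θs - L) (θs + L),
      HasDerivWithinAt E (E' θ) (Icc (θs - L) (θs + L)) θ)
    (hE'' : ∀ θ ∈ Icc (θs - L) (θs + L),
      HasDerivWithinAt E' (E'' θ) (Icc (θs - L) (θs + L)) θ)
    (hsym : ∀ t ∈ Icc (0 : ℝ) L, E (θs - t) = E (θs + t))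
    (hconv : ∀ θ ∈ Icc (θs - L) (θs + L), |E' θ| ≤ δ → 2 ≤ E'' θ) :
    ∀ θ ∈ Icc θs (θs + L), min δ (2 * (θ - θs)) ≤ E' θ := by
  have h0 : E' θs = 0 := step0 hL hE' hsym
  have hpos := step1 hL hδ hE' hE'' hsym hconv
  have contE' : ContinuousOn E' (Icc (θs - L) (θs + L)) :=
    fun θ hθ => (hE'' θ hθ).continuousWithinAt
  by_contra hcon
  push_neg at hcon
  obtain ⟨θ₀, hθ₀, hlt⟩ := hcon
  have hEθ₀δ : E' θ₀ < δ := lt_of_lt_of_le hlt (min_le_left _ _)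
  have hsub2 : Icc θs θ₀ ⊆ Icc (θs - L) (θs + L) :=
    Icc_subset_Icc (by linarith) hθ₀.2
  set B : Set ℝ := Icc θs θ₀ ∩ E' ⁻¹' Ici δ with hB_def
  by_cases hB : B.Nonempty
  · have hBcl : IsClosed B :=
      (contE'.mono hsub2).preimage_isClosed_of_isClosed isClosed_Icc isClosed_Ici
    set c := sSup B with hc_def
    have hcB : c ∈ B := hBcl.csSup_mem hB ⟨θ₀, fun x hx => hx.1.2⟩
    have hcθ₀ : c < θ₀ := by
      rcases lt_or_eq_of_le hcB.1.2 with h | h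
      · exact h
      · exfalso; have := hcB.2; rw [h] at this; simp only [mem_preimage, mem_Ici] at this; linarith
    set ε := (δ - E' θ₀) / 2 with hε_def
    have hε : 0 < ε := by rw [hε_def]; linarith
    -- find c' ∈ Ioc c θ₀ with E' c' > δ - ε
    have hcI : c ∈ Icc (θs - L) (θs + L) := hsub2 hcB.1
    have hcwa : ContinuousWithinAt E' (Ioc c θ₀) c :=
      (contE'.continuousWithinAt hcI).mono (fun x hx => hsub2 ⟨hcB.1.1.trans hx.1.le, hx.2⟩)
    have hne : (𝓝[Ioc c θ₀] c).NeBot := by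
      rw [← mem_closure_iff_nhdsWithin_neBot, closure_Ioc hcθ₀.ne]
      exact ⟨le_rfl, hcθ₀.le⟩
    have hev : ∀ᶠ t in 𝓝[Ioc c θ₀] c, δ - ε < E' t := by
      apply hcwa.eventually
      apply eventually_gt_nhds
      have := hcB.2
      simp only [mem_preimage, mem_Ici] at this
      linarith
    obtain ⟨c', hc'val, hc'mem⟩ := (hev.and self_mem_nhdsWithin).exists
    -- now apply mono_aux on [c', θ₀]
    have hgrow : 2 * (θ₀ - c') ≤ E' θ₀ - E' c' := by
      refine mono_aux hE'' (by linarith [hcB.1.1, hc'mem.1]) hc'mem.2 hθ₀.2 ?_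
      intro t ht
      have htI : t ∈ Icc (θs - L) (θs + L) :=
        ⟨by linarith [hcB.1.1, hc'mem.1, ht.1], by linarith [ht.2, hθ₀.2]⟩
      refine hconv t htI ?_
      have htpos : 0 ≤ E' t := hpos t ⟨by linarith [hcB.1.1, hc'mem.1, ht.1], htI.2⟩
      have htlt : E' t < δ := by
        by_contra hge
        have htB : t ∈ B := ⟨⟨by linarith [hcB.1.1, hc'mem.1, ht.1], ht.2.le⟩, le_of_not_gt hge⟩
        exact absurd (le_csSup ⟨θ₀, fun x hx => hx.1.2⟩ htB) (not_le.mpr (by linarith [hc'mem.1, ht.1]))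
      rw [abs_le]; exact ⟨by linarith, htlt.le⟩
    have : θ₀ - c' ≥ 0 := by linarith [hc'mem.2]
    rw [hε_def] at hc'val
    linarith
  · -- B empty
    have hgrow : 2 * (θ₀ - θs) ≤ E' θ₀ - E' θs := by
      refine mono_aux hE'' (by linarith) hθ₀.1 hθ₀.2 ?_
      intro t ht
      have htI : t ∈ Icc (θs - L) (θs + L) := ⟨by linarith [ht.1], by linarith [ht.2, hθ₀.2]⟩
      refine hconv t htI ?_
      have htpos : 0 ≤ E' t := hpos t ⟨ht.1.le, htI.2⟩
      have htlt : E' t < δ := by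
        by_contra hge
        exact hB ⟨t, ⟨ht.1.le, ht.2.le⟩, le_of_not_gt hge⟩
      rw [abs_le]; exact ⟨by linarith, htlt.le⟩
    rw [h0] at hgrow
    have := min_le_right δ (2 * (θ₀ - θs))
    linarith

variable {L θs δ : ℝ} {E E' E'' : ℝ → ℝ}

-- Core lemma: both points right of θs, x ≤ y
lemma coreCL (hL : 0 < L) (hδ : 0 < δ)
    (hE' : ∀ θ ∈ Icc (θs - L) (θs + L),
      HasDerivWithinAt E (E' θ) (Icc (θs - L) (θs + L)) θ)
    (hE'' : ∀ θ ∈ Icc (θs - L) (θs + L),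
      HasDerivWithinAt E' (E'' θ) (Icc (θs - L) (θs + L)) θ)
    (hsym : ∀ t ∈ Icc (0 : ℝ) L, E (θs - t) = E (θs + t))
    (hconv : ∀ θ ∈ Icc (θs - L) (θs + L), |E' θ| ≤ δ → 2 ≤ E'' θ)
    {x y : ℝ} (hx : x ∈ Icc (θs - L) (θs + L)) (hy : y ∈ Icc (θs - L) (θs + L))
    (hθsx : θs ≤ x) (hxy : x ≤ y) (hd : y - x ≤ δ) :
    (y - x) ^ 2 / 2 ≤ E y - E x := by
  have key2 := step2 hL hδ hE' hE'' hsym hconv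
  set d := y - x with hd_def
  have hd0 : 0 ≤ d := by linarith
  set m := (x + y) / 2 with hm_def
  have h1 : d * (y - m) ≤ E y - E m := by
    refine mono_aux hE' (by linarith [hx.1]) (by rw [hm_def]; linarith) hy.2 ?_
    intro t ht
    have htm : m < t := ht.1
    have hty : t < y := ht.2
    have htI : t ∈ Icc θs (θs + L) := ⟨by rw [hm_def] at htm; linarith, by linarith [hy.2]⟩
    have := key2 t htI
    have hmin : d ≤ min δ (2 * (t - θs)) := by
      refine le_min hd ?_
      rw [hm_def] at htm; rw [hd_def]; nlinarith
    linarith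
  have h2 : (0:ℝ) * (m - x) ≤ E m - E x := by
    refine mono_aux hE' hx.1 (by rw [hm_def]; linarith) (by rw [hm_def]; linarith [hy.2]) ?_
    intro t ht
    have htI : t ∈ Icc θs (θs + L) := ⟨by linarith [ht.1], by rw [hm_def] at ht; linarith [ht.2, hy.2]⟩
    have := key2 t htI
    have : (0:ℝ) ≤ min δ (2 * (t - θs)) := le_min hδ.le (by linarith [ht.1])
    linarith [key2 t htI]
  have hym : y - m = d / 2 := by rw [hm_def, hd_def]; ring
  rw [hym] at h1
  nlinarith

-- Same-side lemma (either both ≥ θs or both ≤ θs), any order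
lemma coreSS (hL : 0 < L) (hδ : 0 < δ)
    (hE' : ∀ θ ∈ Icc (θs - L) (θs + L),
      HasDerivWithinAt E (E' θ) (Icc (θs - L) (θs + L)) θ)
    (hE'' : ∀ θ ∈ Icc (θs - L) (θs + L),
      HasDerivWithinAt E' (E'' θ) (Icc (θs - L) (θs + L)) θ)
    (hsym : ∀ t ∈ Icc (0 : ℝ) L, E (θs - t) = E (θs + t))
    (hconv : ∀ θ ∈ Icc (θs - L) (θs + L), |E' θ| ≤ δ → 2 ≤ E'' θ)
    {x y : ℝ} (hx : x ∈ Icc (θs - L) (θs + L)) (hy : y ∈ Icc (θs - L) (θs + L))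
    (hside : (θs ≤ x ∧ θs ≤ y) ∨ (x ≤ θs ∧ y ≤ θs)) (hd : |y - x| ≤ δ) :
    (y - x) ^ 2 / 2 ≤ |E y - E x| := by
  -- reduce to ordered case
  wlog hxy : x ≤ y generalizing x y
  · have := this hy hx (by tauto) (by rwa [abs_sub_comm]) (by linarith [le_of_not_ge hxy])
    rw [abs_sub_comm (E x) (E y)] at this
    calc (y - x)^2/2 = (x - y)^2/2 := by ring
    _ ≤ |E y - E x| := this
  have habs : |y - x| = y - x := abs_of_nonneg (by linarith)
  rw [habs] at hd
  rcases hside with ⟨h1, h2⟩ | ⟨h1, h2⟩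
  · have := coreCL hL hδ hE' hE'' hsym hconv hx hy h1 hxy hd
    exact this.trans (le_abs_self _)
  · -- reflect
    have hx' := reflmem (θ := y) hy
    have hy' := reflmem (θ := x) hx
    have h := coreCL hL hδ hE' hE'' hsym hconv hx' hy' (by linarith) (by linarith) (by linarith)
    rw [reflE hsym hx, reflE hsym hy] at h
    calc (y - x)^2/2 = (2*θs - x - (2*θs - y))^2/2 := by ring
    _ ≤ E x - E y := h
    _ ≤ |E y - E x| := by rw [abs_sub_comm]; exact le_abs_self _

lemma keylem (hL : 0 < L) (hδ : 0 < δ)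
    (hE' : ∀ θ ∈ Icc (θs - L) (θs + L),
      HasDerivWithinAt E (E' θ) (Icc (θs - L) (θs + L)) θ)
    (hE'' : ∀ θ ∈ Icc (θs - L) (θs + L),
      HasDerivWithinAt E' (E'' θ) (Icc (θs - L) (θs + L)) θ)
    (hsym : ∀ t ∈ Icc (0 : ℝ) L, E (θs - t) = E (θs + t))
    (hconv : ∀ θ ∈ Icc (θs - L) (θs + L), |E' θ| ≤ δ → 2 ≤ E'' θ) :
    (∀ θ₁ ∈ Icc (θs - L) (θs + L), ∀ θ₂ ∈ Icc (θs - L) (θs + L),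
      min |θ₂ - θ₁| |θ₂ + θ₁ - 2 * θs| ≤ δ →
      (min |θ₂ - θ₁| |θ₂ + θ₁ - 2 * θs|) ^ 2 / 2 ≤ |E θ₂ - E θ₁|) ∧
    (∀ θ ∈ Icc (θs - L) (θs + L), min δ |θ - θs| ≤ |E' θ|) := by
  constructor
  · intro θ₁ hθ₁ θ₂ hθ₂ hM
    rcases le_total |θ₂ - θ₁| |θ₂ + θ₁ - 2 * θs| with hcmp | hcmp
    · have hMeq : min |θ₂ - θ₁| |θ₂ + θ₁ - 2 * θs| = |θ₂ - θ₁| := min_eq_left hcmp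
      rw [hMeq] at hM ⊢
      have hsq : (θ₂ - θ₁) ^ 2 ≤ (θ₂ + θ₁ - 2 * θs) ^ 2 := by
        have := mul_self_le_mul_self (abs_nonneg (θ₂ - θ₁)) hcmp
        nlinarith [sq_abs (θ₂ - θ₁), sq_abs (θ₂ + θ₁ - 2 * θs)]
      have hab : 0 ≤ (θ₂ - θs) * (θ₁ - θs) := by nlinarith
      have hside : (θs ≤ θ₁ ∧ θs ≤ θ₂) ∨ (θ₁ ≤ θs ∧ θ₂ ≤ θs) := by
        rcases mul_nonneg_iff.mp hab with ⟨ha, hb⟩ | ⟨ha, hb⟩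
        · left; constructor <;> linarith [ha, hb]
        · right; constructor <;> linarith [ha, hb]
      have := coreSS hL hδ hE' hE'' hsym hconv hθ₁ hθ₂ hside hM
      calc |θ₂ - θ₁| ^ 2 / 2 = (θ₂ - θ₁) ^ 2 / 2 := by rw [sq_abs]
      _ ≤ |E θ₂ - E θ₁| := this
    · have hMeq : min |θ₂ - θ₁| |θ₂ + θ₁ - 2 * θs| = |θ₂ + θ₁ - 2 * θs| := min_eq_right hcmp
      rw [hMeq] at hM ⊢
      have hsq : (θ₂ + θ₁ - 2 * θs) ^ 2 ≤ (θ₂ - θ₁) ^ 2 := by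
        have := mul_self_le_mul_self (abs_nonneg (θ₂ + θ₁ - 2 * θs)) hcmp
        nlinarith [sq_abs (θ₂ - θ₁), sq_abs (θ₂ + θ₁ - 2 * θs)]
      have hab : 0 ≤ (2 * θs - θ₁ - θs) * (θ₂ - θs) := by nlinarith
      have hside : (θs ≤ 2 * θs - θ₁ ∧ θs ≤ θ₂) ∨ (2 * θs - θ₁ ≤ θs ∧ θ₂ ≤ θs) := by
        rcases mul_nonneg_iff.mp hab with ⟨ha, hb⟩ | ⟨ha, hb⟩
        · left; constructor <;> linarith [ha, hb]
        · right; constructor <;> linarith [ha, hb]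
      have hd : |θ₂ - (2 * θs - θ₁)| ≤ δ := by
        rw [show θ₂ - (2 * θs - θ₁) = θ₂ + θ₁ - 2 * θs by ring]; exact hM
      have := coreSS hL hδ hE' hE'' hsym hconv (reflmem hθ₁) hθ₂ hside hd
      rw [reflE hsym hθ₁] at this
      calc |θ₂ + θ₁ - 2 * θs| ^ 2 / 2 = (θ₂ - (2 * θs - θ₁)) ^ 2 / 2 := by
            rw [sq_abs]; ring
      _ ≤ |E θ₂ - E θ₁| := this
  · intro θ hθ
    have key2 := step2 hL hδ hE' hE'' hsym hconv
    rcases le_total θs θ with h | h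
    · have h1 := key2 θ ⟨h, hθ.2⟩
      have h2 : min δ |θ - θs| ≤ min δ (2 * (θ - θs)) := by
        rw [abs_of_nonneg (by linarith : (0:ℝ) ≤ θ - θs)]
        exact le_min (min_le_left _ _) ((min_le_right _ _).trans (by linarith))
      exact h2.trans (h1.trans (le_abs_self _))
    · have hmem : 2 * θs - θ ∈ Icc θs (θs + L) := ⟨by linarith, by linarith [hθ.1]⟩
      have h1 := key2 _ hmem
      rw [reflE' hL hE' hsym hθ] at h1
      have h2 : min δ |θ - θs| ≤ min δ (2 * (2 * θs - θ - θs)) := by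
        rw [abs_of_nonpos (by linarith : θ - θs ≤ (0:ℝ))]
        exact le_min (min_le_left _ _) ((min_le_right _ _).trans (by linarith))
      exact h2.trans (h1.trans (neg_le_abs _))




/-- Morse-type lemma: let `E` be `C²` on `[θ_s − L, θ_s + L]` (with derivative
data `E'`, `E''`), symmetric around `θ_s`, and suppose that `|E'(θ)| ≤ δ` forces `E''(θ) ≥ 2`
(uniformly of one sign, or `≤ −2`). Then
(i) `|E(θ₂) − E(θ₁)| ≥ M²/2` whenever `M = min(|θ₂ − θ₁|, |θ₂ + θ₁ − 2θ_s|) ≤ δ`, and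
(ii) `|E'(θ)| ≥ min(δ, |θ − θ_s|)`. -/
theorem statement15 (L θs δ : ℝ) (hL : 0 < L) (hδ : 0 < δ)
    (E E' E'' : ℝ → ℝ)
    (hE' : ∀ θ ∈ Set.Icc (θs - L) (θs + L),
      HasDerivWithinAt E (E' θ) (Set.Icc (θs - L) (θs + L)) θ)
    (hE'' : ∀ θ ∈ Set.Icc (θs - L) (θs + L),
      HasDerivWithinAt E' (E'' θ) (Set.Icc (θs - L) (θs + L)) θ)
    (hE''cont : ContinuousOn E'' (Set.Icc (θs - L) (θs + L)))
    (hsym : ∀ t ∈ Set.Icc (0 : ℝ) L, E (θs - t) = E (θs + t))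
    (hconv : (∀ θ ∈ Set.Icc (θs - L) (θs + L), |E' θ| ≤ δ → 2 ≤ E'' θ) ∨
             (∀ θ ∈ Set.Icc (θs - L) (θs + L), |E' θ| ≤ δ → E'' θ ≤ -2)) :
    (∀ θ₁ ∈ Set.Icc (θs - L) (θs + L), ∀ θ₂ ∈ Set.Icc (θs - L) (θs + L),
      min |θ₂ - θ₁| |θ₂ + θ₁ - 2 * θs| ≤ δ →
      (min |θ₂ - θ₁| |θ₂ + θ₁ - 2 * θs|) ^ 2 / 2 ≤ |E θ₂ - E θ₁|) ∧
    (∀ θ ∈ Set.Icc (θs - L) (θs + L), min δ |θ - θs| ≤ |E' θ|) := by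
  rcases hconv with h | h
  · exact keylem hL hδ hE' hE'' hsym h
  · have key := keylem (E := fun θ => -E θ) (E' := fun θ => -E' θ) (E'' := fun θ => -E'' θ)
      hL hδ (fun θ hθ => (hE' θ hθ).neg) (fun θ hθ => (hE'' θ hθ).neg)
      (fun t ht => by simp [hsym t ht])
      (fun θ hθ habs => by
        simp only [abs_neg] at habs
        have := h θ hθ habs
        show 2 ≤ -E'' θ
        linarith)
    constructor
    · intro θ₁ hθ₁ θ₂ hθ₂ hM
      have := key.1 θ₁ hθ₁ θ₂ hθ₂ hM
      rwa [show -E θ₂ - -E θ₁ = -(E θ₂ - E θ₁) by ring, abs_neg] at this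
    · intro θ hθ
      have := key.2 θ hθ
      rwa [abs_neg] at this
end

section
/- (Eigenvalue counting via Green's function bounds.) Let a : ℤ^d × ℤ^d → ℝ satisfy a(x, y) = a(y, x) for all x, y, and for a finite set Λ ⊂ ℤ^d let H_Λ denote the symmetric matrix (a(x, y))_{x,y ∈ Λ}. Let E* ∈ ℝ, η > 0, M ∈ ℕ, and let Λ, Λ' ⊂ ℤ^d be finite sets with #(Λ \ Λ') + #(Λ' \ Λ) ≤ M. If H_{Λ'} − E* is invertible and ‖(H_{Λ'} − E*)⁻¹‖ ≤ (2η)⁻¹ in operator norm, then the number of eigenvalues of H_Λ in the interval [E* − η, E* + η], counted with multiplicity, is at most 3M. -/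
open scoped InnerProductSpace

/-- `‖t‖`: the distance from a real number `t` to the nearest integer. -/
noncomputable def distToInt (t : ℝ) : ℝ := |t - round t|

/-- The ℓ¹ norm `‖x‖₁ = Σᵢ |xᵢ|` on `ℤ^d`. -/
def nrm1 {d : ℕ} (x : Fin d → ℤ) : ℤ := ∑ i, |x i|

/-- The dot product `x·ω` for `x ∈ ℤ^d`, `ω ∈ ℝ^d`. -/
noncomputable def dotw {d : ℕ} (x : Fin d → ℤ) (ω : Fin d → ℝ) : ℝ := ∑ i, (x i : ℝ) * ω i

/-- The ℓ¹ norm on `ℝ^d`. -/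
noncomputable def nrm1R {d : ℕ} (x : Fin d → ℝ) : ℝ := ∑ i, |x i|

/-- The dot product on `ℝ^d`. -/
noncomputable def dotwR {d : ℕ} (x ω : Fin d → ℝ) : ℝ := ∑ i, x i * ω i

/-- The standing hypotheses on the `C²`-cosine like potential `v` with parameter `a`:
`v` is `C²`, even and `1`-periodic, `0` is a nondegenerate maximum, `1/2` is a nondegenerate
minimum, these are the only critical points modulo `1`, `|v''| > 3` near `0` and `1/2`
(within distance `a`), and `|v'| > 3` away from `0` and `1/2`. -/
structure CosLike (v : ℝ → ℝ) (a : ℝ) : Prop where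
  smooth : ContDiff ℝ 2 v
  even : ∀ θ, v (-θ) = v θ
  periodic : ∀ θ, v (θ + 1) = v θ
  a_pos : 0 < a
  a_lt : a < 1 / 10
  critMax : deriv v 0 = 0
  critMax' : deriv (deriv v) 0 < 0
  critMin : deriv v (1 / 2) = 0
  critMin' : 0 < deriv (deriv v) (1 / 2)
  onlyCrit : ∀ θ ∈ Set.Ico (0 : ℝ) 1, deriv v θ = 0 → θ = 0 ∨ θ = 1 / 2
  deriv2_big : ∀ θ, (distToInt θ < a ∨ distToInt (θ - 1 / 2) < a) → 3 < |deriv (deriv v) θ|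
  deriv_big : ∀ θ, a ≤ distToInt θ → a ≤ distToInt (θ - 1 / 2) → 3 < |deriv v θ|

/-- `M₁ = sup_θ max(|v(θ)|, |v'(θ)|, |v''(θ)|)`. -/
noncomputable def M1 (v : ℝ → ℝ) : ℝ :=
  ⨆ θ : ℝ, max |v θ| (max |deriv v θ| |deriv (deriv v) θ|)

/-- The finite-volume Schrödinger operator `H_Λ(θ) = ε Δ + v(θ + x·ω) δ_{x,y}` as a matrix
indexed by a finite set `Λ ⊂ ℤ^d`. -/
noncomputable def Hmat {d : ℕ} (ε : ℝ) (v : ℝ → ℝ) (ω : Fin d → ℝ) (θ : ℝ)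
    (Λ : Finset (Fin d → ℤ)) : Matrix Λ Λ ℝ :=
  Matrix.of fun x y =>
    if nrm1 (x.1 - y.1) = 1 then ε
    else if x = y then v (θ + dotw x.1 ω) else 0

/-- The discrete ℓ¹-ball `{x ∈ ℤ^d : ‖x − c‖₁ ≤ r}` as a `Finset`. -/
noncomputable def ball1 {d : ℕ} (c : Fin d → ℤ) (r : ℝ) : Finset (Fin d → ℤ) :=
  (Finset.Icc (fun i => c i - ⌈r⌉) (fun i => c i + ⌈r⌉)).filter
    fun x => ((nrm1 (x - c) : ℤ) : ℝ) ≤ r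

/-- The discrete ℓ¹-ball around a (possibly non-integer) center `c ∈ ℝ^d`. -/
noncomputable def ballR {d : ℕ} (c : Fin d → ℝ) (r : ℝ) : Finset (Fin d → ℤ) :=
  (Finset.Icc (fun i => ⌊c i - r⌋ - 1) (fun i => ⌈c i + r⌉ + 1)).filter
    fun x => nrm1R (fun i => (x i : ℝ) - c i) ≤ r

/-- The nearest neighbours of `x` in `ℤ^d`. -/
noncomputable def nbrs {d : ℕ} (x : Fin d → ℤ) : Finset (Fin d → ℤ) :=
  (Finset.Icc (fun i => x i - 1) (fun i => x i + 1)).filter fun y => nrm1 (y - x) = 1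

/-- `δ₀ = ε₀^{1/20}`. -/
noncomputable def delta0 (ε₀ : ℝ) : ℝ := ε₀ ^ ((1 : ℝ) / 20)

open Matrix
open scoped RealInnerProductSpace

open Matrix in
private lemma eunorm16 {m : Type*} [Fintype m] (x : EuclideanSpace ℝ m) :
    ‖x‖ = Real.sqrt (∑ i, (x i)^2) := by
  rw [EuclideanSpace.norm_eq]
  congr 1
  exact Finset.sum_congr rfl fun i _ => by rw [Real.norm_eq_abs, sq_abs]

/-- eigenvalue counting via Green's function bounds: let `a` be a symmetric
real kernel on `ℤ^d`, `Λ, Λ'` finite sets with `#(Λ \ Λ') + #(Λ' \ Λ) ≤ M`. If `H_{Λ'} − E*`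
is invertible with inverse of norm at most `(2η)⁻¹`, then `H_Λ` has at most `3M` eigenvalues
(with multiplicity) in `[E* − η, E* + η]`. -/
theorem statement16 {d : ℕ} (A : (Fin d → ℤ) → (Fin d → ℤ) → ℝ)
    (hsymm : ∀ x y, A x y = A y x)
    (Es η : ℝ) (hη : 0 < η) (M : ℕ)
    (Λ Λ' : Finset (Fin d → ℤ))
    (hM : (Λ \ Λ').card + (Λ' \ Λ).card ≤ M)
    (hherm : (Matrix.of fun x y : Λ => A x.1 y.1).IsHermitian)
    (hinv : IsUnit ((Matrix.of fun x y : Λ' => A x.1 y.1) - Es • 1))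
    (hbound : ‖(Matrix.toEuclideanCLM (𝕜 := ℝ)
          (((Matrix.of fun x y : Λ' => A x.1 y.1) - Es • 1)⁻¹) :
        EuclideanSpace ℝ Λ' →L[ℝ] EuclideanSpace ℝ Λ')‖ ≤ (2 * η)⁻¹) :
    (Finset.univ.filter fun i : Λ =>
        hherm.eigenvalues i ∈ Set.Icc (Es - η) (Es + η)).card ≤ 3 * M := by
  classical
  set H : Matrix Λ Λ ℝ := (Matrix.of fun x y : Λ => A x.1 y.1) with hHdef
  set H' : Matrix Λ' Λ' ℝ := (Matrix.of fun x y : Λ' => A x.1 y.1) with hH'def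
  set P : Finset Λ := (Finset.univ.filter fun i : Λ =>
        hherm.eigenvalues i ∈ Set.Icc (Es - η) (Es + η)) with hPdef
  set B := hherm.eigenvectorBasis with hBdef
  -- the extension-by-zero of a vector on Λ to all of ℤ^d
  set ext : EuclideanSpace ℝ Λ → (Fin d → ℤ) → ℝ :=
    fun v z => if h : z ∈ Λ then v ⟨z, h⟩ else 0 with hextdef
  have ext_add : ∀ (v u : EuclideanSpace ℝ Λ) z, ext (v + u) z = ext v z + ext u z := by
    intro v u z
    by_cases h : z ∈ Λ <;> simp [hextdef, h]
  have ext_smul : ∀ (c : ℝ) (v : EuclideanSpace ℝ Λ) z, ext (c • v) z = c * ext v z := by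
    intro c v z
    by_cases h : z ∈ Λ <;> simp [hextdef, h]
  let L : EuclideanSpace ℝ Λ →ₗ[ℝ]
      ({i : Λ // i ∉ P} → ℝ) × ((Λ \ Λ' : Finset (Fin d → ℤ)) → ℝ) ×
        ((Λ' \ Λ : Finset (Fin d → ℤ)) → ℝ) :=
    { toFun := fun v =>
        ⟨fun i => B.repr v i.1,
         fun x => v ⟨x.1, (Finset.mem_sdiff.1 x.2).1⟩,
         fun x => ((H' - Es • 1) *ᵥ (fun y : Λ' => ext v y.1))
            ⟨x.1, (Finset.mem_sdiff.1 x.2).1⟩⟩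
      map_add' := by
        intro v u
        refine Prod.ext ?_ (Prod.ext ?_ ?_)
        · funext i; simp
        · funext x; simp
        · funext x
          have hw : (fun y : Λ' => ext (v + u) y.1)
              = (fun y : Λ' => ext v y.1) + (fun y : Λ' => ext u y.1) := by
            funext y; exact ext_add v u y.1
          simp only [hw, Matrix.mulVec_add]
          rfl
      map_smul' := by
        intro c v
        refine Prod.ext ?_ (Prod.ext ?_ ?_)
        · funext i; simp
        · funext x; simp
        · funext x
          have hw : (fun y : Λ' => ext (c • v) y.1)
              = c • (fun y : Λ' => ext v y.1) := by
            funext y; exact ext_smul c v y.1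
          simp only [hw, Matrix.mulVec_smul]
          rfl }
  have hinj : Function.Injective L := by
    rw [injective_iff_map_eq_zero]
    intro v hv
    have hc : ∀ i : Λ, i ∉ P → B.repr v i = 0 := by
      intro i hi
      have := congrFun (congrArg Prod.fst hv) ⟨i, hi⟩
      exact this
    have hz : ∀ (z) (h : z ∈ Λ), z ∉ Λ' → v ⟨z, h⟩ = 0 := by
      intro z h h'
      have := congrFun (congrArg (fun p => p.2.1) hv)
        ⟨z, Finset.mem_sdiff.2 ⟨h, h'⟩⟩
      exact this
    set w : EuclideanSpace ℝ Λ' := WithLp.toLp 2 (fun y : Λ' => ext v y.1) with hwdef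
    set u : EuclideanSpace ℝ Λ' := WithLp.toLp 2 ((H' - Es • 1) *ᵥ w) with hudef
    have hu0 : ∀ (z) (h : z ∈ Λ'), z ∉ Λ → u ⟨z, h⟩ = 0 := by
      intro z h h'
      have := congrFun (congrArg (fun p => p.2.2) hv)
        ⟨z, Finset.mem_sdiff.2 ⟨h, h'⟩⟩
      exact this
    set Mv : EuclideanSpace ℝ Λ := WithLp.toLp 2 ((H - Es • 1) *ᵥ v) with hMvdef
    -- ext v vanishes outside Λ ∩ Λ'
    have hext0 : ∀ z, z ∉ Λ ∩ Λ' → ext v z = 0 := by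
      intro z hz'
      by_cases hzΛ : z ∈ Λ
      · have h2 : z ∉ Λ' := fun h => hz' (Finset.mem_inter.2 ⟨hzΛ, h⟩)
        show (if h : z ∈ Λ then v ⟨z, h⟩ else 0) = 0
        rw [dif_pos hzΛ]
        exact hz z hzΛ h2
      · exact dif_neg hzΛ
    have hextΛ : ∀ y : Λ, ext v y.1 = v y := fun y => dif_pos y.2
    -- Claim A : ‖w‖ = ‖v‖
    have hsum_gen : ∀ f : (Fin d → ℤ) → ℝ,
        ∑ z ∈ Λ', (ext v z) * f z = ∑ z ∈ Λ, (ext v z) * f z := by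
      intro f
      have h1 : ∀ z ∈ Λ', z ∉ Λ ∩ Λ' → ext v z * f z = 0 := by
        intro z _ hz2; rw [hext0 z hz2, zero_mul]
      have h2 : ∀ z ∈ Λ, z ∉ Λ ∩ Λ' → ext v z * f z = 0 := by
        intro z _ hz2; rw [hext0 z hz2, zero_mul]
      rw [← Finset.sum_subset (Finset.inter_subset_right (s₁ := Λ)) h1,
          ← Finset.sum_subset (Finset.inter_subset_left (s₂ := Λ')) h2]
    -- Claim A : ‖w‖ = ‖v‖
    have hwv : ‖w‖ = ‖v‖ := by
      rw [eunorm16, eunorm16]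
      congr 1
      calc ∑ y : Λ', (w y)^2 = ∑ z ∈ Λ', ext v z * ext v z := by
            rw [← Finset.sum_coe_sort Λ' (fun z => ext v z * ext v z)]
            exact Finset.sum_congr rfl fun y _ => by rw [sq]
        _ = ∑ z ∈ Λ, ext v z * ext v z := hsum_gen (ext v)
        _ = ∑ y : Λ, (v y)^2 := by
            rw [← Finset.sum_coe_sort Λ (fun z => ext v z * ext v z)]
            exact Finset.sum_congr rfl fun y _ => by rw [hextΛ y, sq]
    -- pointwise formula for `u`
    have hmv : ∀ (z : Fin d → ℤ) (hzΛ' : z ∈ Λ'), u ⟨z, hzΛ'⟩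
        = (∑ y : Λ', A z y.1 * ext v y.1) - Es * ext v z := by
      intro z hzΛ'
      have hentry : ∀ y : Λ', (H' - Es • (1 : Matrix Λ' Λ' ℝ)) ⟨z, hzΛ'⟩ y
          = A z y.1 - (if (⟨z, hzΛ'⟩ : Λ') = y then Es else 0) := by
        intro y
        by_cases h : (⟨z, hzΛ'⟩ : Λ') = y
        · subst h
          simp [hH'def, Matrix.sub_apply, Matrix.smul_apply, Matrix.one_apply]
        · simp [hH'def, Matrix.sub_apply, Matrix.smul_apply, Matrix.one_apply, h]
      show ∑ y : Λ', (H' - Es • 1) ⟨z, hzΛ'⟩ y * w y = _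
      calc ∑ y : Λ', (H' - Es • 1) ⟨z, hzΛ'⟩ y * w y
          = ∑ y : Λ', (A z y.1 * ext v y.1
              - (if (⟨z, hzΛ'⟩ : Λ') = y then Es * ext v y.1 else 0)) := by
            refine Finset.sum_congr rfl fun y _ => ?_
            rw [hentry y, sub_mul, ite_mul, zero_mul]
        _ = (∑ y : Λ', A z y.1 * ext v y.1) - Es * ext v z := by
            rw [Finset.sum_sub_distrib, Finset.sum_ite_eq]
            simp
    have hmvΛ : ∀ (z : Fin d → ℤ) (hzΛ : z ∈ Λ), Mv ⟨z, hzΛ⟩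
        = (∑ y : Λ, A z y.1 * v y) - Es * v ⟨z, hzΛ⟩ := by
      intro z hzΛ
      have hentry : ∀ y : Λ, (H - Es • (1 : Matrix Λ Λ ℝ)) ⟨z, hzΛ⟩ y
          = A z y.1 - (if (⟨z, hzΛ⟩ : Λ) = y then Es else 0) := by
        intro y
        by_cases h : (⟨z, hzΛ⟩ : Λ) = y
        · subst h
          simp [hHdef, Matrix.sub_apply, Matrix.smul_apply, Matrix.one_apply]
        · simp [hHdef, Matrix.sub_apply, Matrix.smul_apply, Matrix.one_apply, h]
      show ∑ y : Λ, (H - Es • 1) ⟨z, hzΛ⟩ y * v y = _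
      calc ∑ y : Λ, (H - Es • 1) ⟨z, hzΛ⟩ y * v y
          = ∑ y : Λ, (A z y.1 * v y
              - (if (⟨z, hzΛ⟩ : Λ) = y then Es * v y else 0)) := by
            refine Finset.sum_congr rfl fun y _ => ?_
            rw [hentry y, sub_mul, ite_mul, zero_mul]
        _ = (∑ y : Λ, A z y.1 * v y) - Es * v ⟨z, hzΛ⟩ := by
            rw [Finset.sum_sub_distrib, Finset.sum_ite_eq]
            simp
    -- `u` agrees with the extension of `Mv`
    have hkey : ∀ y : Λ', u y = ext Mv y.1 := by
      rintro ⟨z, hzΛ'⟩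
      by_cases hzΛ : z ∈ Λ
      · have he : ext Mv z = Mv ⟨z, hzΛ⟩ := dif_pos hzΛ
        rw [he, hmv z hzΛ', hmvΛ z hzΛ,
          show ext v z = v ⟨z, hzΛ⟩ from dif_pos hzΛ]
        congr 1
        calc ∑ y : Λ', A z y.1 * ext v y.1 = ∑ t ∈ Λ', ext v t * A z t := by
              rw [← Finset.sum_coe_sort Λ' (fun t => ext v t * A z t)]
              exact Finset.sum_congr rfl fun y _ => by ring
          _ = ∑ t ∈ Λ, ext v t * A z t := hsum_gen _
          _ = ∑ y : Λ, A z y.1 * v y := by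
              rw [← Finset.sum_coe_sort Λ (fun t => ext v t * A z t)]
              exact Finset.sum_congr rfl fun y _ => by rw [hextΛ y]; ring
      · rw [hu0 z hzΛ' hzΛ]
        simp [hextdef, hzΛ]
    -- Claim C : ‖u‖ ≤ ‖Mv‖
    have hC : ‖u‖ ≤ ‖Mv‖ := by
      rw [eunorm16, eunorm16]
      apply Real.sqrt_le_sqrt
      calc ∑ y : Λ', (u y)^2 = ∑ z ∈ Λ', (ext Mv z)^2 := by
            rw [← Finset.sum_coe_sort Λ' (fun z => (ext Mv z)^2)]
            exact Finset.sum_congr rfl fun y _ => by rw [hkey y]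
        _ = ∑ z ∈ Λ' ∩ Λ, (ext Mv z)^2 :=
            (Finset.sum_subset (Finset.inter_subset_left) (fun z hz1 hz2 => by
              rw [show ext Mv z = 0 from
                dif_neg (fun h => hz2 (Finset.mem_inter.2 ⟨hz1, h⟩))]
              ring)).symm
        _ ≤ ∑ z ∈ Λ, (ext Mv z)^2 :=
            Finset.sum_le_sum_of_subset_of_nonneg Finset.inter_subset_right
              (fun z _ _ => sq_nonneg _)
        _ = ∑ y : Λ, (Mv y)^2 := by
            rw [← Finset.sum_coe_sort Λ (fun z => (ext Mv z)^2)]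
            exact Finset.sum_congr rfl fun y _ => by
              rw [show ext Mv y.1 = Mv y from dif_pos y.2]
    -- Claim D : ‖Mv‖ ≤ η * ‖v‖
    have hMsym : (H - Es • (1 : Matrix Λ Λ ℝ))ᵀ = H - Es • 1 := by
      have hHsym : Hᵀ = H := by
        ext x y
        simp [hHdef, Matrix.transpose_apply, hsymm x.1 y.1]
      rw [Matrix.transpose_sub, hHsym, Matrix.transpose_smul, Matrix.transpose_one]
    have hrepr : ∀ i : Λ, B.repr Mv i = (hherm.eigenvalues i - Es) * B.repr v i := by
      intro i
      rw [B.repr_apply_apply, B.repr_apply_apply]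
      have h2 : H *ᵥ (B i) = hherm.eigenvalues i • (B i) := hherm.mulVec_eigenvectorBasis i
      have h1 : (H - Es • 1) *ᵥ (B i) = (hherm.eigenvalues i - Es) • (B i) := by
        rw [Matrix.sub_mulVec, Matrix.smul_mulVec, Matrix.one_mulVec, sub_smul, h2]
        simp only [WithLp.ofLp_sub, WithLp.ofLp_smul]
      calc ⟪B i, Mv⟫ = (B i) ⬝ᵥ ((H - Es • 1) *ᵥ v) := by
            simp [PiLp.inner_apply, dotProduct, hMvdef, mul_comm]
        _ = ((H - Es • 1)ᵀ *ᵥ (B i)) ⬝ᵥ v := by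
            rw [Matrix.dotProduct_mulVec, ← Matrix.mulVec_transpose]
        _ = ((hherm.eigenvalues i - Es) • (B i)) ⬝ᵥ v := by rw [hMsym, h1]
        _ = (hherm.eigenvalues i - Es) * ((B i) ⬝ᵥ v) := smul_dotProduct _ _ _
        _ = (hherm.eigenvalues i - Es) * ⟪B i, v⟫ := by
            simp [PiLp.inner_apply, dotProduct, mul_comm]
    have hD : ‖Mv‖ ≤ η * ‖v‖ := by
      rw [← B.repr.norm_map Mv, ← B.repr.norm_map v, eunorm16, eunorm16]
      have hsq : Real.sqrt (∑ i, η^2 * (B.repr v i)^2)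
          = η * Real.sqrt (∑ i, (B.repr v i)^2) := by
        rw [← Finset.mul_sum, Real.sqrt_mul (by positivity), Real.sqrt_sq hη.le]
      rw [← hsq]
      apply Real.sqrt_le_sqrt
      apply Finset.sum_le_sum
      intro i _
      rw [hrepr i]
      by_cases hiP : i ∈ P
      · have hev : hherm.eigenvalues i ∈ Set.Icc (Es - η) (Es + η) := by
          rw [hPdef] at hiP
          simpa using hiP
        have habs : (hherm.eigenvalues i - Es)^2 ≤ η^2 :=
          sq_le_sq' (by linarith [hev.1]) (by linarith [hev.2])
        rw [mul_pow]
        exact mul_le_mul_of_nonneg_right habs (sq_nonneg _)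
      · rw [hc i hiP]
        simp [sq_nonneg]
    -- conclude `v = 0`
    have hdet : IsUnit (H' - Es • (1 : Matrix Λ' Λ' ℝ)).det :=
      (Matrix.isUnit_iff_isUnit_det _).1 hinv
    have hwu : w = WithLp.toLp 2 ((H' - Es • 1)⁻¹ *ᵥ u) := by
      rw [hudef, WithLp.ofLp_toLp, Matrix.mulVec_mulVec, Matrix.nonsing_inv_mul _ hdet, Matrix.one_mulVec]
    have hnw : ‖w‖ ≤ (2*η)⁻¹ * ‖u‖ := by
      have h1 : ‖(Matrix.toEuclideanCLM (𝕜 := ℝ) (H' - Es • 1)⁻¹) u‖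
          ≤ ‖(Matrix.toEuclideanCLM (𝕜 := ℝ) (H' - Es • 1)⁻¹ :
              EuclideanSpace ℝ Λ' →L[ℝ] EuclideanSpace ℝ Λ')‖ * ‖u‖ :=
        ContinuousLinearMap.le_opNorm _ _
      have h2 : (Matrix.toEuclideanCLM (𝕜 := ℝ) (H' - Es • 1)⁻¹) u = w := by
        rw [hwu]; rfl
      rw [h2] at h1
      exact h1.trans (mul_le_mul_of_nonneg_right hbound (norm_nonneg _))
    have hvle : ‖v‖ ≤ (2*η)⁻¹ * (η * ‖v‖) :=
      calc ‖v‖ = ‖w‖ := hwv.symm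
        _ ≤ (2*η)⁻¹ * ‖u‖ := hnw
        _ ≤ (2*η)⁻¹ * (η * ‖v‖) :=
            mul_le_mul_of_nonneg_left (hC.trans hD) (by positivity)
    have hv0 : ‖v‖ ≤ 0 := by
      have h2 : (2*η)⁻¹ * (η * ‖v‖) = ‖v‖ / 2 := by
        field_simp
      rw [h2] at hvle
      linarith
    exact norm_le_zero_iff.1 hv0
  -- dimension counting
  have hfin := LinearMap.finrank_le_finrank_of_injective hinj
  rw [finrank_euclideanSpace, Module.finrank_prod, Module.finrank_prod,
    Module.finrank_fintype_fun_eq_card, Module.finrank_fintype_fun_eq_card,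
    Module.finrank_fintype_fun_eq_card] at hfin
  have hcard1 : Fintype.card {i : Λ // i ∉ P} = Λ.card - P.card := by
    rw [Fintype.card_subtype_compl, Fintype.card_coe]
    congr 1
    exact Fintype.card_coe P
  have hcard2 : Fintype.card (Λ \ Λ' : Finset (Fin d → ℤ)) = (Λ \ Λ').card :=
    Fintype.card_coe _
  have hcard3 : Fintype.card (Λ' \ Λ : Finset (Fin d → ℤ)) = (Λ' \ Λ).card :=
    Fintype.card_coe _
  have hcard0 : Fintype.card Λ = Λ.card := Fintype.card_coe _
  rw [hcard0, hcard1, hcard2, hcard3] at hfin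
  have hPle : P.card ≤ Λ.card := by
    calc P.card ≤ Fintype.card Λ := Finset.card_le_univ P
      _ = Λ.card := Fintype.card_coe _
  omega
end
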